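/- (Continuity and smoothness of the water-filling formula at breakpoints, from the proof of Lemma 5.2.) Assume σ_1² ≥ … ≥ σ_n² > 0 and ρ₁ > 0. For 1 ≤ k ≤ n define F_k(z) = Σ_{i=1}^k log( (σ_i²/(k ρ₁)) ( z + Σ_{j=1}^k ρ₁/σ_j² ) ), and for 1 ≤ k ≤ n−1 define q_k = k ρ₁/σ_{k+1}² − Σ_{i=1}^k ρ₁/σ_i². Then for every 1 ≤ k ≤ n−1: (i) F_k(q_k) = F_{k+1}(q_k) = Σ_{i=1}^k log(σ_i²/σ_{k+1}²); and (ii) the derivatives match: F_k′(q_k) = F_{k+1}′(q_k) = σ_{k+1}²/ρ₁. -/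

import Mathlib

open Finset

lemma logterm_deriv (c s z₀ : ℝ) (hc : 0 < c) (hz : 0 < z₀ + s) :
    HasDerivAt (fun z => Real.log (c * (z + s))) (1 / (z₀ + s)) z₀ := by
  have h1 : HasDerivAt (fun z => c * (z + s)) c z₀ := by
    simpa using ((hasDerivAt_id z₀).add_const s).const_mul c
  have h2 := (Real.hasDerivAt_log (ne_of_gt (mul_pos hc hz))).comp z₀ h1
  refine h2.congr_deriv ?_
  have hc' := hc.ne'
  have hz' := hz.ne'
  field_simp

/-- continuity and smoothness of the water-filling formula at breakpoints.
Here `σ i` is the 0-based gain `σ_{i+1}²`, so the paper's `σ_{k+1}²` is `σ k`,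
`F_k(z) = Σ_{i ∈ range k} log((σ i/(kρ))(z + Σ_{j ∈ range k} ρ/σ j))` and
`q_k = kρ/σ k − Σ_{i ∈ range k} ρ/σ i`. -/
theorem stmt19 {n : ℕ} (hn : 1 ≤ n) (ρ : ℝ) (hρ : 0 < ρ)
    (σ : ℕ → ℝ) (hpos : ∀ i < n, 0 < σ i)
    (hmono : ∀ i j, i ≤ j → j < n → σ j ≤ σ i)
    (F : ℕ → ℝ → ℝ)
    (hF : ∀ k, 1 ≤ k → k ≤ n → ∀ z : ℝ, F k z =
      ∑ i ∈ Finset.range k, Real.log (σ i / (k * ρ) * (z + ∑ j ∈ Finset.range k, ρ / σ j)))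
    (q : ℕ → ℝ)
    (hq : ∀ k, 1 ≤ k → k ≤ n - 1 → q k = k * ρ / σ k - ∑ i ∈ Finset.range k, ρ / σ i)
    (k : ℕ) (hk1 : 1 ≤ k) (hk2 : k ≤ n - 1) :
    F k (q k) = F (k + 1) (q k) ∧
    F k (q k) = (∑ i ∈ Finset.range k, Real.log (σ i / σ k)) ∧
    HasDerivAt (F k) (σ k / ρ) (q k) ∧
    HasDerivAt (F (k + 1)) (σ k / ρ) (q k) := by
  have hkn : k < n := by omega
  have hk1n : k + 1 ≤ n := by omega
  have hσk : 0 < σ k := hpos k hkn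
  have hσi : ∀ i < k + 1, 0 < σ i := fun i hi => hpos i (by omega)
  have hk0 : (0:ℝ) < (k:ℝ) := by exact_mod_cast hk1
  set s : ℝ := ∑ i ∈ range k, ρ / σ i with hs
  have hq' : q k + s = k * ρ / σ k := by rw [hq k hk1 hk2]; ring
  have hs1 : (∑ j ∈ range (k+1), ρ / σ j) = s + ρ / σ k := Finset.sum_range_succ _ k
  have hq'' : q k + ∑ j ∈ range (k+1), ρ / σ j = (k+1) * ρ / σ k := by
    rw [hs1, ← add_assoc, hq']
    field_simp
  have hpossum : 0 < q k + s := by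
    rw [hq']; positivity
  have hpossum' : 0 < q k + ∑ j ∈ range (k+1), ρ / σ j := by
    rw [hq'']; positivity
  -- values
  have hFk : F k (q k) = ∑ i ∈ range k, Real.log (σ i / σ k) := by
    rw [hF k hk1 hkn.le]
    refine Finset.sum_congr rfl fun i hi => ?_
    rw [← hs, hq']
    congr 1
    have hσi' : σ i ≠ 0 := (hσi i (by simp at hi; omega)).ne'
    field_simp
  have hFk1 : F (k+1) (q k) = ∑ i ∈ range k, Real.log (σ i / σ k) := by
    rw [hF (k+1) (by omega) hk1n]
    have hterm : ∀ i < k + 1,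
        σ i / ((k+1 : ℕ) * ρ) * (q k + ∑ j ∈ range (k+1), ρ / σ j) = σ i / σ k := by
      intro i hi
      rw [hq'']
      have hσi' : σ i ≠ 0 := (hσi i hi).ne'
      push_cast
      field_simp
    rw [Finset.sum_range_succ]
    rw [hterm k (by omega), div_self hσk.ne', Real.log_one, add_zero]
    refine Finset.sum_congr rfl fun i hi => ?_
    rw [hterm i (by simp at hi; omega)]
  -- derivatives
  have hd1 : HasDerivAt (F k) (σ k / ρ) (q k) := by
    have heq : F k = fun z => ∑ i ∈ range k,
        Real.log (σ i / (k * ρ) * (z + s)) := funext (hF k hk1 hkn.le)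
    rw [heq]
    have hd : HasDerivAt (fun z => ∑ i ∈ range k, Real.log (σ i / (k * ρ) * (z + s)))
        (∑ _i ∈ range k, 1 / (q k + s)) (q k) :=
      HasDerivAt.fun_sum fun i hi =>
        logterm_deriv _ s (q k)
          (div_pos (hσi i (by simp at hi; omega)) (mul_pos hk0 hρ)) hpossum
    convert hd using 1
    rw [Finset.sum_const, Finset.card_range, nsmul_eq_mul, hq']
    field_simp
  have hd2 : HasDerivAt (F (k+1)) (σ k / ρ) (q k) := by
    have heq : F (k+1) = fun z => ∑ i ∈ range (k+1),
        Real.log (σ i / ((k+1:ℕ) * ρ) * (z + ∑ j ∈ range (k+1), ρ / σ j)) :=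
      funext (hF (k+1) (by omega) hk1n)
    rw [heq]
    have hk0' : (0:ℝ) < ((k+1:ℕ):ℝ) := by positivity
    have hd : HasDerivAt (fun z => ∑ i ∈ range (k+1),
        Real.log (σ i / ((k+1:ℕ) * ρ) * (z + ∑ j ∈ range (k+1), ρ / σ j)))
        (∑ _i ∈ range (k+1), 1 / (q k + ∑ j ∈ range (k+1), ρ / σ j)) (q k) :=
      HasDerivAt.fun_sum fun i hi =>
        logterm_deriv _ _ (q k)
          (div_pos (hσi i (by simpa using hi)) (mul_pos hk0' hρ)) hpossum'
    convert hd using 1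
    rw [Finset.sum_const, Finset.card_range, nsmul_eq_mul, hq'']
    push_cast
    field_simp
  exact ⟨hFk.trans hFk1.symm, hFk, hd1, hd2⟩
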